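/- Let (F_n) be a semiring family of graphs and let G and H be finite simple graphs. Then η_F^frac(G ⋉ H) ≤ η_F^frac(G * H) ≤ η_F^frac(G) · η_F^frac(H), i.e., the fractional F-number is submultiplicative under lexicographic and disjunctive products. -/

import Mathlib

open SimpleGraph

universe u v

/-- The join `G + H` of two simple graphs. -/
def graphJoin {α : Type u} {β : Type v} (G : SimpleGraph α) (H : SimpleGraph β) :
    SimpleGraph (α ⊕ β) where
  Adj x y :=
    match x, y with
    | Sum.inl a, Sum.inl a' => G.Adj a a'
    | Sum.inr b, Sum.inr b' => H.Adj b b'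
    | Sum.inl _, Sum.inr _ => True
    | Sum.inr _, Sum.inl _ => True
  symm := by
    constructor
    rintro (a | b) (a' | b') h
    · exact G.symm.symm _ _ h
    · trivial
    · trivial
    · exact H.symm.symm _ _ h
  loopless := by
    constructor
    rintro (a | b) h
    · exact G.loopless.irrefl a h
    · exact H.loopless.irrefl b h

/-- The disjunctive product `G * H`. -/
def disjProd {α : Type u} {β : Type v} (G : SimpleGraph α) (H : SimpleGraph β) :
    SimpleGraph (α × β) where
  Adj p q := G.Adj p.1 q.1 ∨ H.Adj p.2 q.2
  symm := ⟨fun p q h => h.imp (fun h' => G.symm.symm _ _ h') (fun h' => H.symm.symm _ _ h')⟩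
  loopless := ⟨fun p h => h.elim (fun h' => G.loopless.irrefl p.1 h') (fun h' => H.loopless.irrefl p.2 h')⟩

/-- The lexicographic product `G ⋉ H`. -/
def lexProd {α : Type u} {β : Type v} (G : SimpleGraph α) (H : SimpleGraph β) :
    SimpleGraph (α × β) where
  Adj p q := G.Adj p.1 q.1 ∨ (p.1 = q.1 ∧ H.Adj p.2 q.2)
  symm := ⟨fun p q h => h.imp (fun h' => G.symm.symm _ _ h') (fun h' => ⟨h'.1.symm, H.symm.symm _ _ h'.2⟩)⟩
  loopless := ⟨fun p h => h.elim (fun h' => G.loopless.irrefl p.1 h') (fun h' => H.loopless.irrefl p.2 h'.2)⟩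

/-- The `d`-fold blowup `G ⋉ d`, i.e. the lexicographic product `G ⋉ K_d`. -/
def blowup {α : Type u} (G : SimpleGraph α) (d : ℕ) : SimpleGraph (α × Fin d) :=
  lexProd G (⊤ : SimpleGraph (Fin d))

/-- The `d`-fractionalization `G/d`: the graph of `d`-cliques of `G`, with two
`d`-cliques adjacent iff they are disjoint and pairwise adjacent. -/
def fracGraph {α : Type u} (G : SimpleGraph α) (d : ℕ) :
    SimpleGraph {S : Finset α // S.card = d ∧ G.IsClique (S : Set α)} where
  Adj S T := S ≠ T ∧ Disjoint S.val T.val ∧ ∀ a ∈ S.val, ∀ b ∈ T.val, G.Adj a b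
  symm := by
    constructor
    rintro S T ⟨hne, hd, hadj⟩
    exact ⟨hne.symm, hd.symm, fun b hb a ha => (hadj a ha b hb).symm⟩
  loopless := ⟨fun S h => h.1 rfl⟩

/-- The `n`-fold disjunctive power `G^{*n}`. -/
def disjPow {α : Type u} (G : SimpleGraph α) (n : ℕ) :
    SimpleGraph (Fin n → α) where
  Adj f g := ∃ i, G.Adj (f i) (g i)
  symm := ⟨fun f g ⟨i, h⟩ => ⟨i, h.symm⟩⟩
  loopless := ⟨fun f ⟨i, h⟩ => G.loopless.irrefl _ h⟩

/-- A semiring family of graphs. -/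
structure SemiringFamily where
  V : ℕ → Type u
  F : ∀ n, SimpleGraph (V n)
  isEmpty_zero : IsEmpty (V 0)
  nonempty_one : Nonempty (V 1)
  add_hom : ∀ n m : ℕ, Nonempty (graphJoin (F n) (F m) →g F (n + m))
  mul_hom : ∀ n m : ℕ, Nonempty (disjProd (F n) (F m) →g F (n * m))

/-- The `F`-number: the least `n` such that `G → F_n`. -/
noncomputable def etaF (F : SemiringFamily.{u}) {α : Type v} (G : SimpleGraph α) : ℕ :=
  sInf {n : ℕ | Nonempty (G →g F.F n)}

/-- The fractional `F`-number. -/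
noncomputable def etaFrac (F : SemiringFamily.{u}) {α : Type v} (G : SimpleGraph α) : ℝ :=
  sInf {x : ℝ | ∃ n d : ℕ, 1 ≤ d ∧ Nonempty (G →g fracGraph (F.F n) d) ∧ x = (n : ℝ) / d}

/-- The asymptotic `F`-number. -/
noncomputable def etaAsymp (F : SemiringFamily.{u}) {α : Type v} (G : SimpleGraph α) : ℝ :=
  sInf {x : ℝ | ∃ n : ℕ, 1 ≤ n ∧ x = (etaF F (disjPow G n) : ℝ) ^ ((1 : ℝ) / n)}

/-- The orthogonal complement of a set of vertices. -/
def perp {α : Type u} (G : SimpleGraph α) (S : Set α) : Set α :=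
  {v | ∀ s ∈ S, G.Adj v s}

/-- A flat is a set of vertices with `S^{⊥⊥} = S`. -/
def IsFlat {α : Type u} (G : SimpleGraph α) (S : Set α) : Prop :=
  perp G (perp G S) = S

/-- Homomorphic equivalence of two graphs. -/
def HomEquiv {α : Type u} {β : Type v} (G : SimpleGraph α) (H : SimpleGraph β) : Prop :=
  Nonempty (G →g H) ∧ Nonempty (H →g G)

/-- A linear-like semiring family: every flat of `F_n` induces a subgraph with some
clique number `k`, homomorphically equivalent to `F_k`. -/
structure LinearLikeFamily extends SemiringFamily where
  linearLike : ∀ n (S : Set (V n)), IsFlat (F n) S →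
    ∃ k : ℕ, (∃ s : Finset S, ((F n).induce S).IsNClique k s) ∧
      (∀ s : Finset S, ¬ ((F n).induce S).IsNClique (k + 1) s) ∧
      HomEquiv ((F n).induce S) (F k)


section Helpers

variable (F : SemiringFamily.{u})

lemma SemiringFamily.exists_clique (m : ℕ) :
    ∃ f : Fin m → F.V m, ∀ i j : Fin m, i ≠ j → (F.F m).Adj (f i) (f j) := by
  induction m with
  | zero => exact ⟨fun i => i.elim0, fun i => i.elim0⟩
  | succ m ih =>
    obtain ⟨f, hf⟩ := ih
    obtain ⟨v⟩ := F.nonempty_one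
    obtain ⟨φ⟩ := F.add_hom m 1
    refine ⟨fun i => if h : (i : ℕ) < m then φ (Sum.inl (f ⟨i, h⟩)) else φ (Sum.inr v), ?_⟩
    intro i j hij
    by_cases hi : (i : ℕ) < m <;> by_cases hj : (j : ℕ) < m <;> simp only [hi, hj, dif_pos, dif_neg, not_false_iff]
    · refine φ.map_adj (G := graphJoin (F.F m) (F.F 1)) ?_
      have : (⟨(i : ℕ), hi⟩ : Fin m) ≠ ⟨(j : ℕ), hj⟩ := by
        intro h
        rw [Fin.mk.injEq] at h
        exact hij (Fin.ext h)
      exact hf _ _ this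
    · exact φ.map_adj (G := graphJoin (F.F m) (F.F 1)) trivial
    · exact φ.map_adj (G := graphJoin (F.F m) (F.F 1)) trivial
    · exfalso
      have hi' : (i : ℕ) = m := Nat.le_antisymm (Nat.lt_succ_iff.mp i.isLt) (Nat.le_of_not_lt hi)
      have hj' : (j : ℕ) = m := Nat.le_antisymm (Nat.lt_succ_iff.mp j.isLt) (Nat.le_of_not_lt hj)
      exact hij (Fin.ext (hi'.trans hj'.symm))

end Helpers

section Helpers2

variable (F : SemiringFamily.{u})

lemma frac_hom_nonempty {γ : Type*} [Fintype γ] (G : SimpleGraph γ) :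
    Nonempty (G →g fracGraph (F.F (Fintype.card γ)) 1) := by
  obtain ⟨f, hf⟩ := F.exists_clique (Fintype.card γ)
  let e := Fintype.equivFin γ
  refine ⟨⟨fun x => ⟨{f (e x)}, by simp, by
    simp [SimpleGraph.isClique_iff, Set.Pairwise]⟩, ?_⟩⟩
  intro x y hxy
  have hne : e x ≠ e y := fun h => G.ne_of_adj hxy (e.injective h)
  have hadj := hf _ _ hne
  have hfne : f (e x) ≠ f (e y) := (F.F _).ne_of_adj hadj
  refine ⟨?_, ?_, ?_⟩
  · intro h
    apply hfne
    have := congrArg Subtype.val h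
    simpa using this
  · simpa [Finset.disjoint_singleton] using hfne
  · intro a ha b hb
    simp only [Finset.mem_singleton] at ha hb
    subst ha; subst hb; exact hadj

lemma etaFracSet_nonempty {γ : Type*} [Fintype γ] (G : SimpleGraph γ) :
    {x : ℝ | ∃ n d : ℕ, 1 ≤ d ∧ Nonempty (G →g fracGraph (F.F n) d) ∧ x = (n : ℝ) / d}.Nonempty :=
  ⟨_, Fintype.card γ, 1, le_refl 1, frac_hom_nonempty F G, rfl⟩

lemma etaFracSet_bddBelow {γ : Type*} (G : SimpleGraph γ) :
    BddBelow {x : ℝ | ∃ n d : ℕ, 1 ≤ d ∧ Nonempty (G →g fracGraph (F.F n) d) ∧ x = (n : ℝ) / d} := by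
  refine ⟨0, ?_⟩
  rintro x ⟨n, d, hd, _, rfl⟩
  positivity

lemma prod_frac_hom {γ : Type*} {δ : Type*} (G : SimpleGraph γ) (H : SimpleGraph δ)
    {n m d e : ℕ} (hd : 1 ≤ d) (he : 1 ≤ e)
    (f : G →g fracGraph (F.F n) d) (g : H →g fracGraph (F.F m) e) :
    Nonempty (disjProd G H →g fracGraph (F.F (n * m)) (d * e)) := by
  classical
  obtain ⟨μ⟩ := F.mul_hom n m
  have key : ∀ (S : Finset (F.V n)) (T : Finset (F.V m)),
      (F.F n).IsClique (S : Set _) → (F.F m).IsClique (T : Set _) →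
      ∀ x ∈ S ×ˢ T, ∀ y ∈ S ×ˢ T, x ≠ y → (disjProd (F.F n) (F.F m)).Adj x y := by
    intro S T hS hT x hx y hy hxy
    rw [Finset.mem_product] at hx hy
    by_cases h1 : x.1 = y.1
    · have h2 : x.2 ≠ y.2 := fun h2 => hxy (Prod.ext h1 h2)
      exact Or.inr (hT hx.2 hy.2 h2)
    · exact Or.inl (hS hx.1 hy.1 h1)
  have injOn : ∀ (S : Finset (F.V n)) (T : Finset (F.V m)),
      (F.F n).IsClique (S : Set _) → (F.F m).IsClique (T : Set _) →
      Set.InjOn μ ((S ×ˢ T : Finset _) : Set (F.V n × F.V m)) := by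
    intro S T hS hT x hx y hy hxy
    rw [Finset.mem_coe] at hx hy
    by_contra hne
    exact (F.F (n * m)).loopless.irrefl _ (hxy ▸ μ.map_adj (key S T hS hT x hx y hy hne))
  refine ⟨⟨fun p => ⟨((f p.1).1 ×ˢ (g p.2).1).image μ, ?_, ?_⟩, ?_⟩⟩
  · rw [Finset.card_image_of_injOn (injOn _ _ (f p.1).2.2 (g p.2).2.2),
      Finset.card_product, (f p.1).2.1, (g p.2).2.1]
  · intro x hx y hy hxy
    simp only [Finset.coe_image, Set.mem_image, Finset.mem_coe] at hx hy
    obtain ⟨a, ha, rfl⟩ := hx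
    obtain ⟨b, hb, rfl⟩ := hy
    have hab : a ≠ b := fun h => hxy (by rw [h])
    exact μ.map_adj (key _ _ (f p.1).2.2 (g p.2).2.2 a ha b hb hab)
  · rintro ⟨v, w⟩ ⟨v', w'⟩ hadj
    have cross : ∀ x ∈ (f v).1 ×ˢ (g w).1, ∀ y ∈ (f v').1 ×ˢ (g w').1,
        (disjProd (F.F n) (F.F m)).Adj x y := by
      intro x hx y hy
      rw [Finset.mem_product] at hx hy
      rcases hadj with h | h
      · exact Or.inl ((f.map_adj h).2.2 _ hx.1 _ hy.1)
      · exact Or.inr ((g.map_adj h).2.2 _ hx.2 _ hy.2)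
    have cross' : ∀ a ∈ (((f v).1 ×ˢ (g w).1).image μ), ∀ b ∈ (((f v').1 ×ˢ (g w').1).image μ),
        (F.F (n * m)).Adj a b := by
      intro a ha b hb
      rw [Finset.mem_image] at ha hb
      obtain ⟨x, hx, rfl⟩ := ha
      obtain ⟨y, hy, rfl⟩ := hb
      exact μ.map_adj (cross x hx y hy)
    have hdisj : Disjoint (((f v).1 ×ˢ (g w).1).image μ) (((f v').1 ×ˢ (g w').1).image μ) := by
      rw [Finset.disjoint_left]
      intro a ha ha'
      exact (F.F (n * m)).loopless.irrefl a (cross' a ha a ha')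
    refine ⟨?_, hdisj, cross'⟩
    intro hEq
    have hcard : (((f v).1 ×ˢ (g w).1).image μ).card = d * e := by
      rw [Finset.card_image_of_injOn (injOn _ _ (f v).2.2 (g w).2.2),
        Finset.card_product, (f v).2.1, (g w).2.1]
    have hne : (((f v).1 ×ˢ (g w).1).image μ).Nonempty := by
      rw [← Finset.card_pos, hcard]
      exact Nat.mul_pos hd he
    have hval : (((f v).1 ×ˢ (g w).1).image μ) = (((f v').1 ×ˢ (g w').1).image μ) :=
      congrArg Subtype.val hEq
    rw [hval] at hdisj
    obtain ⟨a, ha⟩ := hne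
    rw [hval] at ha
    exact (Finset.disjoint_left.mp hdisj ha) ha

end Helpers2

/-- The fractional `F`-number is submultiplicative under lexicographic and
disjunctive products. -/
theorem etaFrac_submultiplicative (F : SemiringFamily.{u}) {α : Type v} {β : Type w}
    [Fintype α] [Fintype β] (G : SimpleGraph α) (H : SimpleGraph β) :
    etaFrac F (lexProd G H) ≤ etaFrac F (disjProd G H) ∧
      etaFrac F (disjProd G H) ≤ etaFrac F G * etaFrac F H := by
  constructor
  · refine csInf_le_csInf (etaFracSet_bddBelow F _) (etaFracSet_nonempty F _) ?_
    rintro x ⟨n, d, hd, ⟨h⟩, rfl⟩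
    refine ⟨n, d, hd, ⟨h.comp ⟨id, ?_⟩⟩, rfl⟩
    intro p q hpq
    exact hpq.imp id And.right
  · set a := etaFrac F G with ha
    set b := etaFrac F H with hb
    have hA := etaFracSet_nonempty F G
    have hB := etaFracSet_nonempty F H
    have hAb := etaFracSet_bddBelow F G
    have hBb := etaFracSet_bddBelow F H
    have hCb := etaFracSet_bddBelow F (disjProd G H)
    have ha0 : 0 ≤ a := Real.sInf_nonneg (by rintro x ⟨n, d, hd, _, rfl⟩; positivity)
    have hb0 : 0 ≤ b := Real.sInf_nonneg (by rintro x ⟨n, d, hd, _, rfl⟩; positivity)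
    refine le_of_forall_pos_le_add ?_
    intro ε hε
    have hab1 : (0:ℝ) < a + b + 1 := by linarith
    set δ := min 1 (ε / (a + b + 1)) with hδdef
    have hδ : 0 < δ := lt_min one_pos (div_pos hε hab1)
    obtain ⟨x, hxA, hx⟩ := Real.lt_sInf_add_pos hA hδ
    obtain ⟨y, hyB, hy⟩ := Real.lt_sInf_add_pos hB hδ
    obtain ⟨n, d, hd, ⟨f⟩, rfl⟩ := hxA
    obtain ⟨m, e, he, ⟨g⟩, rfl⟩ := hyB
    have hmem : ((n : ℝ) / d) * ((m : ℝ) / e) ∈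
        {x : ℝ | ∃ n' d' : ℕ, 1 ≤ d' ∧
          Nonempty (disjProd G H →g fracGraph (F.F n') d') ∧ x = (n' : ℝ) / d'} := by
      refine ⟨n * m, d * e, Nat.one_le_iff_ne_zero.mpr (Nat.mul_ne_zero
        (Nat.one_le_iff_ne_zero.mp hd) (Nat.one_le_iff_ne_zero.mp he)),
        prod_frac_hom F G H hd he f g, ?_⟩
      push_cast
      have hd0 : (d : ℝ) ≠ 0 := Nat.cast_ne_zero.mpr (Nat.one_le_iff_ne_zero.mp hd)
      have he0 : (e : ℝ) ≠ 0 := Nat.cast_ne_zero.mpr (Nat.one_le_iff_ne_zero.mp he)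
      field_simp
    have hstep : etaFrac F (disjProd G H) ≤ ((n : ℝ) / d) * ((m : ℝ) / e) :=
      csInf_le hCb hmem
    have hx0 : (0:ℝ) ≤ (n : ℝ) / d := by positivity
    have hy0 : (0:ℝ) ≤ (m : ℝ) / e := by positivity
    have hδ1 : δ ≤ 1 := min_le_left _ _
    have hδ2 : δ * (a + b + 1) ≤ ε := by
      rw [hδdef]
      calc min 1 (ε / (a + b + 1)) * (a + b + 1) ≤ (ε / (a + b + 1)) * (a + b + 1) :=
            mul_le_mul_of_nonneg_right (min_le_right _ _) (le_of_lt hab1)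
        _ = ε := div_mul_cancel₀ ε (ne_of_gt hab1)
    have hx' : (n : ℝ) / d < a + δ := hx
    have hy' : (m : ℝ) / e < b + δ := hy
    nlinarith [mul_le_mul hx'.le hy'.le hy0 (by linarith : (0:ℝ) ≤ a + δ),
      mul_le_mul_of_nonneg_left hδ1 hδ.le]
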